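/- Suppose (u_k, y_k), k = 0,…,N−1, is a trajectory of a minimal realization (A,B,C,D) of order n, u is persistently exciting of order L+n, and n ≤ ν < L. Fix C_c ∈ ℝ^{p×m} and γ² ∈ ℝ. Then the following are equivalent: (a) for every α ∈ ℝ^{N−L+1} with a zero data-prefix of length ν, γ² Σ_{i=0}^{L−1} |û_i|² − Σ_{i=0}^{L−1} |ŷ_i − C_c û_i|² ≥ 0, where û_i = Σ_{j=0}^{N−L} α_j u_{i+j} and ŷ_i = Σ_{j=0}^{N−L} α_j y_{i+j}; (b) for every trajectory (u_k, y_k), k = 0,…,L−ν−1, of (A,B,C,D) with initial state x_0 = 0 and every h = 0,…,L−ν−1, Σ_{k=0}^{h} (γ² |u_k|² − |y_k − C_c u_k|²) ≥ 0, i.e., (A,B,C,D) is confined over the horizon L−ν to the cone with center C_c and radius γ. -/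

import Mathlib

open Matrix Finset

/-- `(u, y)` is a trajectory of `(A, B, C, D)` over the horizon `N`. -/
def IsTrajectory {n m p : ℕ} (A : Matrix (Fin n) (Fin n) ℝ) (B : Matrix (Fin n) (Fin m) ℝ)
    (C : Matrix (Fin p) (Fin n) ℝ) (D : Matrix (Fin p) (Fin m) ℝ)
    (N : ℕ) (u : ℕ → Fin m → ℝ) (y : ℕ → Fin p → ℝ) : Prop :=
  ∃ x : ℕ → Fin n → ℝ, ∀ k < N,
    x (k + 1) = A.mulVec (x k) + B.mulVec (u k) ∧
    y k = C.mulVec (x k) + D.mulVec (u k)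

/-- `(u, y)` is a trajectory of `(A, B, C, D)` over the horizon `N` starting from `x₀ = 0`. -/
def IsZeroInitTrajectory {n m p : ℕ} (A : Matrix (Fin n) (Fin n) ℝ) (B : Matrix (Fin n) (Fin m) ℝ)
    (C : Matrix (Fin p) (Fin n) ℝ) (D : Matrix (Fin p) (Fin m) ℝ)
    (N : ℕ) (u : ℕ → Fin m → ℝ) (y : ℕ → Fin p → ℝ) : Prop :=
  ∃ x : ℕ → Fin n → ℝ, x 0 = 0 ∧ ∀ k < N,
    x (k + 1) = A.mulVec (x k) + B.mulVec (u k) ∧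
    y k = C.mulVec (x k) + D.mulVec (u k)

/-- The observability matrix `col(C, CA, …, CA^{n-1})`. -/
def obsMat {n p : ℕ} (A : Matrix (Fin n) (Fin n) ℝ) (C : Matrix (Fin p) (Fin n) ℝ) :
    Matrix (Fin n × Fin p) (Fin n) ℝ :=
  fun ip j => (C * A ^ (ip.1 : ℕ)) ip.2 j

/-- The controllability matrix `(B, AB, …, A^{n-1}B)`. -/
def ctrbMat {n m : ℕ} (A : Matrix (Fin n) (Fin n) ℝ) (B : Matrix (Fin n) (Fin m) ℝ) :
    Matrix (Fin n) (Fin n × Fin m) ℝ :=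
  fun i jm => (A ^ (jm.1 : ℕ) * B) i jm.2

/-- Minimality of a realization. -/
def IsMinimal {n m p : ℕ} (A : Matrix (Fin n) (Fin n) ℝ) (B : Matrix (Fin n) (Fin m) ℝ)
    (C : Matrix (Fin p) (Fin n) ℝ) : Prop :=
  (obsMat A C).rank = n ∧ (ctrbMat A B).rank = n

/-- The Hankel matrix of depth `L` of a signal of length `N`. -/
def hankelMat (q L N : ℕ) (u : ℕ → Fin q → ℝ) :
    Matrix (Fin L × Fin q) (Fin (N - L + 1)) ℝ :=
  fun is j => u ((is.1 : ℕ) + (j : ℕ)) is.2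

/-- Persistency of excitation of order `L` of a signal of length `N`. -/
def PersistentlyExciting (m L N : ℕ) (u : ℕ → Fin m → ℝ) : Prop :=
  (hankelMat m L N u).rank = m * L

/-- The linear combination `Σ_j α_j u_{i+j}` of time shifts of a signal. -/
def combSignal {q : ℕ} (N L : ℕ) (α : Fin (N - L + 1) → ℝ) (u : ℕ → Fin q → ℝ) (i : ℕ) :
    Fin q → ℝ :=
  fun s => ∑ j : Fin (N - L + 1), α j * u (i + (j : ℕ)) s

/-- `α` has a zero data-prefix of length `ν` with respect to the data `(u, y)`. -/
def ZeroDataPrefix {m p : ℕ} (N L ν : ℕ) (α : Fin (N - L + 1) → ℝ)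
    (u : ℕ → Fin m → ℝ) (y : ℕ → Fin p → ℝ) : Prop :=
  ∀ i < ν, combSignal N L α u i = 0 ∧ combSignal N L α y i = 0

lemma mulVec_inj_of_rank {I J : Type*} [Fintype I] [Fintype J]
    (M : Matrix I J ℝ) (h : M.rank = Fintype.card J) (v : J → ℝ)
    (hv : M.mulVec v = 0) : v = 0 := by
  have h1 := LinearMap.finrank_range_add_finrank_ker M.mulVecLin
  rw [Module.finrank_pi] at h1
  have hrk : Module.finrank ℝ ↥(LinearMap.range M.mulVecLin) = Fintype.card J := h
  have hker : Module.finrank ℝ ↥(LinearMap.ker M.mulVecLin) = 0 := by omega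
  have hbot : LinearMap.ker M.mulVecLin = ⊥ := Submodule.finrank_eq_zero.mp hker
  have hv' : v ∈ LinearMap.ker M.mulVecLin := by
    simpa [Matrix.mulVecLin] using hv
  rw [hbot] at hv'; simpa using hv'

lemma vecMul_inj_of_rank {I J : Type*} [Fintype I] [Fintype J]
    (M : Matrix I J ℝ) (h : M.rank = Fintype.card I) (w : I → ℝ)
    (hw : Matrix.vecMul w M = 0) : w = 0 := by
  apply mulVec_inj_of_rank Mᵀ (by rw [Matrix.rank_transpose]; exact h)
  rw [Matrix.mulVec_transpose]; exact hw

lemma mulVec_surj_of_leftker {I J : Type*} [Fintype I] [Fintype J]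
    (M : Matrix I J ℝ) (h : ∀ w : I → ℝ, Matrix.vecMul w M = 0 → w = 0)
    (b : I → ℝ) : ∃ α, M.mulVec α = b := by
  have hker : LinearMap.ker Mᵀ.mulVecLin = ⊥ := by
    rw [LinearMap.ker_eq_bot']
    intro w hw
    exact h w (by simpa [Matrix.mulVecLin, Matrix.mulVec_transpose] using hw)
  have h1 := LinearMap.finrank_range_add_finrank_ker Mᵀ.mulVecLin
  rw [Module.finrank_pi, hker] at h1
  rw [finrank_bot, add_zero] at h1
  have hrk : M.rank = Fintype.card I := by rw [← Matrix.rank_transpose]; exact h1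
  have htop : LinearMap.range M.mulVecLin = ⊤ := by
    apply Submodule.eq_top_of_finrank_eq
    rw [Module.finrank_pi]; exact hrk
  have hb : b ∈ LinearMap.range M.mulVecLin := htop ▸ Submodule.mem_top
  obtain ⟨α, hα⟩ := hb
  exact ⟨α, hα⟩

lemma sumdot {ι q : Type*} [Fintype q] (s : Finset ι) (f : ι → q → ℝ) (w : q → ℝ) :
    (∑ i ∈ s, f i) ⬝ᵥ w = ∑ i ∈ s, f i ⬝ᵥ w := by
  simp only [dotProduct, Finset.sum_apply, Finset.sum_mul]
  exact Finset.sum_comm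

lemma dotsum {ι q : Type*} [Fintype q] (s : Finset ι) (f : ι → q → ℝ) (w : q → ℝ) :
    w ⬝ᵥ (∑ i ∈ s, f i) = ∑ i ∈ s, w ⬝ᵥ f i := by
  simp only [dotProduct, Finset.sum_apply, Finset.mul_sum]
  exact Finset.sum_comm

lemma summulVec {ι n' m' : Type*} [Fintype m'] (s : Finset ι) (f : ι → Matrix n' m' ℝ) (v : m' → ℝ) :
    (∑ i ∈ s, f i).mulVec v = ∑ i ∈ s, (f i).mulVec v := by
  funext r
  simp only [Matrix.mulVec, dotProduct, Matrix.sum_apply, Finset.sum_mul, Finset.sum_apply]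
  exact Finset.sum_comm

lemma fund_ker {n m L N : ℕ} {A : Matrix (Fin n) (Fin n) ℝ} {B : Matrix (Fin n) (Fin m) ℝ}
    {u : ℕ → Fin m → ℝ} {x : ℕ → Fin n → ℝ}
    (hx : ∀ k < N, x (k+1) = A.mulVec (x k) + B.mulVec (u k))
    (hpe : PersistentlyExciting m (L+n) N u)
    (hctrb : (ctrbMat A B).rank = n)
    (hLN : L + n ≤ N) (hL : 1 ≤ L)
    (ξ : Fin n → ℝ) (η : ℕ → Fin m → ℝ)
    (hηL : ∀ i, L ≤ i → η i = 0)
    (hrel : ∀ j : ℕ, j ≤ N - L → ξ ⬝ᵥ x j + ∑ i ∈ range L, η i ⬝ᵥ u (j+i) = 0) :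
    ξ = 0 ∧ ∀ i, η i = 0 := by
  set c : ℕ → ℝ := fun k => (Matrix.charpoly A).coeff k with hc
  -- Cayley–Hamilton
  have hCH : A ^ n + ∑ k ∈ range n, c k • A ^ k = 0 := by
    have h := Matrix.aeval_self_charpoly A
    rw [Polynomial.aeval_eq_sum_range] at h
    rw [Matrix.charpoly_natDegree_eq_dim, Fintype.card_fin, Finset.sum_range_succ] at h
    have hm : (Matrix.charpoly A).coeff n = 1 := by
      have := (Matrix.charpoly_monic A).coeff_natDegree
      rwa [Matrix.charpoly_natDegree_eq_dim, Fintype.card_fin] at this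
    rw [hm, one_smul] at h
    linear_combination (norm := abel) h
  -- shifted relations
  have hR : ∀ t j, j + t ≤ N - L →
      ξ ⬝ᵥ ((A^t).mulVec (x j)) + ∑ s ∈ range t, ξ ⬝ᵥ ((A^(t-1-s) * B).mulVec (u (j+s)))
        + ∑ i ∈ range L, η i ⬝ᵥ u (j+t+i) = 0 := by
    intro t
    induction t with
    | zero =>
      intro j hj
      simpa using hrel j (by omega)
    | succ t ih =>
      intro j hj
      have h1 := ih (j+1) (by omega)
      have hxj : x (j+1) = A.mulVec (x j) + B.mulVec (u j) := hx j (by omega)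
      rw [hxj, Matrix.mulVec_add, Matrix.mulVec_mulVec, Matrix.mulVec_mulVec,
        dotProduct_add] at h1
      rw [← pow_succ] at h1
      have hsplit : ∑ s ∈ range (t+1), ξ ⬝ᵥ ((A^(t+1-1-s) * B).mulVec (u (j+s)))
          = (∑ s ∈ range t, ξ ⬝ᵥ ((A^(t-1-s) * B).mulVec (u (j+1+s))))
            + ξ ⬝ᵥ ((A^t * B).mulVec (u j)) := by
        rw [Finset.sum_range_succ']
        simp only [Nat.add_sub_cancel, Nat.sub_zero, add_zero]
        congr 1
        · apply Finset.sum_congr rfl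
          intro s hs
          rw [show t - (s+1) = t - 1 - s by omega, show j + (s+1) = j+1+s by omega]
      have h4 : ∀ i, j + 1 + t + i = j + (t+1) + i := by intro i; omega
      simp only [h4] at h1
      rw [hsplit]
      linarith [h1]
  have hS : ∀ t ≤ n, ∀ j : ℕ,
      ∑ s ∈ range (L+n), (if s < t then Matrix.vecMul ξ (A^(t-1-s) * B) else η (s-t)) ⬝ᵥ u (j+s)
      = ∑ s ∈ range t, ξ ⬝ᵥ ((A^(t-1-s) * B).mulVec (u (j+s)))
        + ∑ i ∈ range L, η i ⬝ᵥ u (j+t+i) := by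
    intro t ht j
    rw [show L + n = t + (L + (n - t)) by omega, Finset.sum_range_add]
    congr 1
    · apply Finset.sum_congr rfl
      intro s hs
      rw [if_pos (mem_range.mp hs), Matrix.dotProduct_mulVec]
    · rw [Finset.sum_range_add]
      have h2 : ∑ s ∈ range (n - t), (if t + (L + s) < t then Matrix.vecMul ξ (A^(t-1-(t+(L+s))) * B) else η (t + (L + s) - t)) ⬝ᵥ u (j+(t+(L+s))) = 0 := by
        apply Finset.sum_eq_zero
        intro s hs
        rw [if_neg (by omega), show t + (L + s) - t = L + s by omega, hηL (L+s) (by omega)]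
        simp
      rw [h2, add_zero]
      apply Finset.sum_congr rfl
      intro i hi
      rw [if_neg (by omega), show t + i - t = i by omega, show j + (t + i) = j + t + i by omega]
  set ζ : ℕ → Fin m → ℝ := fun s =>
    (if s < n then Matrix.vecMul ξ (A^(n-1-s) * B) else η (s-n))
      + ∑ k ∈ range n, c k • (if s < k then Matrix.vecMul ξ (A^(k-1-s) * B) else η (s-k)) with hζdef
  have hZ : ∀ j, j + n ≤ N - L → ∑ s ∈ range (L+n), ζ s ⬝ᵥ u (j+s) = 0 := by
    intro j hj
    have key : ∀ t ≤ n, j + t ≤ N - L →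
        ∑ s ∈ range (L+n), (if s < t then Matrix.vecMul ξ (A^(t-1-s) * B) else η (s-t)) ⬝ᵥ u (j+s)
        = -(ξ ⬝ᵥ ((A^t).mulVec (x j))) := by
      intro t ht hjt
      rw [hS t ht j]
      have := hR t j hjt
      linarith
    simp only [hζdef, add_dotProduct, Finset.sum_add_distrib, sumdot,
      smul_dotProduct, smul_eq_mul]
    rw [key n le_rfl hj, Finset.sum_comm]
    have h2 : ∀ k ∈ range n, ∑ s ∈ range (L+n), c k * ((if s < k then Matrix.vecMul ξ (A^(k-1-s) * B) else η (s-k)) ⬝ᵥ u (j+s)) = c k * -(ξ ⬝ᵥ ((A^k).mulVec (x j))) := by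
      intro k hk
      have hkn := mem_range.mp hk
      rw [← Finset.mul_sum, key k (le_of_lt hkn) (by omega)]
    rw [Finset.sum_congr rfl h2]
    have h3 : ∑ k ∈ range n, c k * -(ξ ⬝ᵥ ((A^k).mulVec (x j))) = -(ξ ⬝ᵥ (((∑ k ∈ range n, c k • A^k)).mulVec (x j))) := by
      rw [summulVec, dotsum, ← Finset.sum_neg_distrib]
      apply Finset.sum_congr rfl
      intro k hk
      rw [Matrix.smul_mulVec, dotProduct_smul, smul_eq_mul]
      ring
    rw [h3]
    have h4 : (A^n).mulVec (x j) + (∑ k ∈ range n, c k • A^k).mulVec (x j) = 0 := by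
      rw [← Matrix.add_mulVec, hCH, Matrix.zero_mulVec]
    have h5 : ξ ⬝ᵥ ((A^n).mulVec (x j)) + ξ ⬝ᵥ ((∑ k ∈ range n, c k • A^k).mulVec (x j)) = 0 := by
      rw [← dotProduct_add, h4, dotProduct_zero]
    linarith
  -- PE kills ζ
  have hζ0 : ∀ s < L + n, ζ s = 0 := by
    set w' : Fin (L+n) × Fin m → ℝ := fun q => ζ q.1 q.2 with hw'
    have hker : Matrix.vecMul w' (hankelMat m (L+n) N u) = 0 := by
      funext j'
      have hj' : (j' : ℕ) + n ≤ N - L := by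
        have := j'.isLt
        omega
      simp only [Pi.zero_apply]
      rw [← hZ j' hj']
      simp only [Matrix.vecMul, dotProduct, hankelMat, Fintype.sum_prod_type]
      rw [← Fin.sum_univ_eq_sum_range (fun s => ∑ i : Fin m, ζ s i * u ((j':ℕ) + s) i) (L+n)]
      apply Finset.sum_congr rfl
      intro i _
      apply Finset.sum_congr rfl
      intro s _
      simp only [w']
      rw [Nat.add_comm (i:ℕ) (j':ℕ)]
    have := vecMul_inj_of_rank (hankelMat m (L+n) N u)
      (by rw [hpe]; simp [Fintype.card_prod, mul_comm]) w' hker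
    intro s hs
    funext s'
    have := congrFun this (⟨s, hs⟩, s')
    simpa [w'] using this
  -- η = 0
  have hη : ∀ i, η i = 0 := by
    have aux : ∀ t, ∀ i, L - t ≤ i → η i = 0 := by
      intro t
      induction t with
      | zero => intro i hi; exact hηL i (by omega)
      | succ t ih =>
        intro i hi
        by_cases h' : L - t ≤ i
        · exact ih i h'
        · have hiL : i < L := by omega
          have hz := hζ0 (n + i) (by omega)
          rw [hζdef] at hz
          simp only [] at hz
          have e1 : ¬ (n + i < n) := by omega
          rw [if_neg e1, show n + i - n = i by omega] at hz
          have e2 : ∀ k ∈ range n, c k • (if n + i < k then Matrix.vecMul ξ (A^(k-1-(n+i)) * B) else η (n + i - k)) = 0 := by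
            intro k hk
            have hkn := mem_range.mp hk
            rw [if_neg (by omega), ih (n + i - k) (by omega), smul_zero]
          rw [Finset.sum_congr rfl e2, Finset.sum_const_zero, add_zero] at hz
          exact hz
    intro i
    exact aux L i (by omega)
  -- ξ A^e B = 0
  have hξB : ∀ e < n, Matrix.vecMul ξ (A^e * B) = 0 := by
    intro e
    induction e using Nat.strong_induction_on with
    | _ e ih =>
      intro he
      have hz := hζ0 (n - 1 - e) (by omega)
      rw [hζdef] at hz
      simp only [] at hz
      rw [if_pos (by omega : n - 1 - e < n), show n - 1 - (n - 1 - e) = e by omega] at hz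
      have e2 : ∀ k ∈ range n, c k • (if n - 1 - e < k then Matrix.vecMul ξ (A^(k-1-(n-1-e)) * B) else η (n - 1 - e - k)) = 0 := by
        intro k hk
        have hkn := mem_range.mp hk
        by_cases hlt : n - 1 - e < k
        · rw [if_pos hlt, ih (k - 1 - (n - 1 - e)) (by omega) (by omega), smul_zero]
        · rw [if_neg hlt, hη _, smul_zero]
      rw [Finset.sum_congr rfl e2, Finset.sum_const_zero, add_zero] at hz
      exact hz
  -- ξ = 0
  have hξ : ξ = 0 := by
    apply vecMul_inj_of_rank (ctrbMat A B) (by rw [hctrb]; simp)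
    funext q
    obtain ⟨k, s⟩ := q
    have := congrFun (hξB k k.isLt) s
    simpa [Matrix.vecMul, dotProduct, ctrbMat] using this
  exact ⟨hξ, hη⟩

lemma fund {n m L N : ℕ} {A : Matrix (Fin n) (Fin n) ℝ} {B : Matrix (Fin n) (Fin m) ℝ}
    {u : ℕ → Fin m → ℝ} {x : ℕ → Fin n → ℝ}
    (hx : ∀ k < N, x (k+1) = A.mulVec (x k) + B.mulVec (u k))
    (hpe : PersistentlyExciting m (L+n) N u)
    (hctrb : (ctrbMat A B).rank = n)
    (hLN : L + n ≤ N) (hL : 1 ≤ L)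
    (x0 : Fin n → ℝ) (v : ℕ → Fin m → ℝ) :
    ∃ α : Fin (N-L+1) → ℝ,
      combSignal N L α x 0 = x0 ∧ ∀ i < L, combSignal N L α u i = v i := by
  set M : Matrix (Fin n ⊕ Fin L × Fin m) (Fin (N - L + 1)) ℝ :=
    fun i j => Sum.elim (fun r => x (j : ℕ) r) (fun q => u ((q.1 : ℕ) + (j : ℕ)) q.2) i with hM
  have hker : ∀ w : (Fin n ⊕ Fin L × Fin m) → ℝ, Matrix.vecMul w M = 0 → w = 0 := by
    intro w hw
    set ξ : Fin n → ℝ := fun r => w (Sum.inl r) with hξdef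
    set η : ℕ → Fin m → ℝ :=
      fun i => if h : i < L then (fun s => w (Sum.inr (⟨i, h⟩, s))) else 0 with hηdef
    have hηL : ∀ i, L ≤ i → η i = 0 := by
      intro i hi
      simp only [hηdef, dif_neg (by omega : ¬ i < L)]
    have hrel : ∀ j : ℕ, j ≤ N - L → ξ ⬝ᵥ x j + ∑ i ∈ range L, η i ⬝ᵥ u (j+i) = 0 := by
      intro j hj
      have hcol := congrFun hw ⟨j, by omega⟩
      simp only [Matrix.vecMul, dotProduct, Pi.zero_apply, Fintype.sum_sum_type,
        Fintype.sum_prod_type, hM, Sum.elim_inl, Sum.elim_inr] at hcol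
      rw [← hcol]
      congr 1
      rw [← Fin.sum_univ_eq_sum_range (fun i => η i ⬝ᵥ u (j + i)) L]
      apply Finset.sum_congr rfl
      intro i _
      simp only [dotProduct, hηdef, dif_pos i.isLt, Fin.eta]
      apply Finset.sum_congr rfl
      intro s _
      rw [Nat.add_comm (i : ℕ) j]
    obtain ⟨hξ0, hη0⟩ := fund_ker hx hpe hctrb hLN hL ξ η hηL hrel
    funext i
    match i with
    | Sum.inl r => exact congrFun hξ0 r
    | Sum.inr (i, s) =>
      have := congrFun (hη0 (i : ℕ)) s
      simpa [hηdef, dif_pos i.isLt, Fin.eta] using this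
  obtain ⟨α, hα⟩ := mulVec_surj_of_leftker M hker
    (Sum.elim x0 (fun q => v (q.1 : ℕ) q.2))
  refine ⟨α, ?_, ?_⟩
  · funext r
    have := congrFun hα (Sum.inl r)
    simp only [Matrix.mulVec, dotProduct, hM, Sum.elim_inl] at this
    rw [← this]
    simp only [combSignal]
    apply Finset.sum_congr rfl
    intro j _
    rw [Nat.zero_add, mul_comm]
  · intro i hi
    funext s
    have := congrFun hα (Sum.inr (⟨i, hi⟩, s))
    simp only [Matrix.mulVec, dotProduct, hM, Sum.elim_inr] at this
    rw [combSignal, ← this]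
    apply Finset.sum_congr rfl
    intro j _
    rw [mul_comm]

lemma mulVec_combSignal {q q' N L : ℕ} (M : Matrix (Fin q') (Fin q) ℝ)
    (α : Fin (N-L+1) → ℝ) (z : ℕ → Fin q → ℝ) (i : ℕ) :
    M.mulVec (combSignal N L α z i) = combSignal N L α (fun k => M.mulVec (z k)) i := by
  funext r
  simp only [Matrix.mulVec, dotProduct, combSignal, Finset.mul_sum]
  rw [Finset.sum_comm]
  apply Finset.sum_congr rfl
  intro j _
  apply Finset.sum_congr rfl
  intro s _
  ring

lemma comb_step_state {n m N L : ℕ} {A : Matrix (Fin n) (Fin n) ℝ} {B : Matrix (Fin n) (Fin m) ℝ}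
    {u : ℕ → Fin m → ℝ} {x : ℕ → Fin n → ℝ}
    (hstate : ∀ k < N, x (k+1) = A.mulVec (x k) + B.mulVec (u k)) (hLN : L ≤ N)
    (α : Fin (N-L+1) → ℝ) {i : ℕ} (hi : i < L) :
    combSignal N L α x (i+1) = A.mulVec (combSignal N L α x i) + B.mulVec (combSignal N L α u i) := by
  funext r
  rw [mulVec_combSignal, mulVec_combSignal]
  simp only [combSignal, Pi.add_apply, ← Finset.sum_add_distrib]
  apply Finset.sum_congr rfl
  intro j _
  have hjN : i + (j:ℕ) < N := by have := j.isLt; omega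
  rw [show i + 1 + (j:ℕ) = (i + (j:ℕ)) + 1 by omega, hstate _ hjN]
  simp [mul_add]

lemma comb_out {n m p N L : ℕ} {C : Matrix (Fin p) (Fin n) ℝ} {D : Matrix (Fin p) (Fin m) ℝ}
    {u : ℕ → Fin m → ℝ} {x : ℕ → Fin n → ℝ} {y : ℕ → Fin p → ℝ}
    (hout : ∀ k < N, y k = C.mulVec (x k) + D.mulVec (u k)) (hLN : L ≤ N)
    (α : Fin (N-L+1) → ℝ) {i : ℕ} (hi : i < L) :
    combSignal N L α y i = C.mulVec (combSignal N L α x i) + D.mulVec (combSignal N L α u i) := by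
  funext r
  rw [mulVec_combSignal, mulVec_combSignal]
  simp only [combSignal, Pi.add_apply, ← Finset.sum_add_distrib]
  apply Finset.sum_congr rfl
  intro j _
  have hjN : i + (j:ℕ) < N := by have := j.isLt; omega
  rw [hout _ hjN]
  simp [mul_add]

lemma dotSelf_nonneg {q : ℕ} (v : Fin q → ℝ) : 0 ≤ v ⬝ᵥ v :=
  Finset.sum_nonneg (fun i _ => mul_self_nonneg _)


lemma sum_range_split (f : ℕ → ℝ) (a b : ℕ) (hab : a ≤ b) :
    ∑ i ∈ Finset.range b, f i = ∑ i ∈ Finset.range a, f i + ∑ i ∈ Finset.range (b - a), f (a + i) := by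
  rw [← Finset.sum_range_add, Nat.add_sub_cancel' hab]

/-- data-based verification of conic relations: the data-based inequality (a)
is equivalent to the system being confined over the horizon `L-ν` to the cone with
center `Cc` and radius `γ`. -/
theorem statement7 {n m p N L ν : ℕ} (A : Matrix (Fin n) (Fin n) ℝ)
    (B : Matrix (Fin n) (Fin m) ℝ) (C : Matrix (Fin p) (Fin n) ℝ) (D : Matrix (Fin p) (Fin m) ℝ)
    (u : ℕ → Fin m → ℝ) (y : ℕ → Fin p → ℝ)
    (htraj : IsTrajectory A B C D N u y)
    (hmin : IsMinimal A B C)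
    (hpe : PersistentlyExciting m (L + n) N u)
    (hnν : n ≤ ν) (hν : ν < L) (hLN : L + n ≤ N)
    (Cc : Matrix (Fin p) (Fin m) ℝ) (γsq : ℝ) :
    (∀ α : Fin (N - L + 1) → ℝ, ZeroDataPrefix N L ν α u y →
      0 ≤ γsq * (∑ i ∈ Finset.range L, combSignal N L α u i ⬝ᵥ combSignal N L α u i) -
          ∑ i ∈ Finset.range L,
            (combSignal N L α y i - Cc.mulVec (combSignal N L α u i)) ⬝ᵥ
            (combSignal N L α y i - Cc.mulVec (combSignal N L α u i))) ↔
    (∀ ub : ℕ → Fin m → ℝ, ∀ yb : ℕ → Fin p → ℝ,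
      IsZeroInitTrajectory A B C D (L - ν) ub yb →
      ∀ h < L - ν, 0 ≤ ∑ k ∈ Finset.range (h + 1),
        (γsq * (ub k ⬝ᵥ ub k) -
          (yb k - Cc.mulVec (ub k)) ⬝ᵥ (yb k - Cc.mulVec (ub k)))) := by
  obtain ⟨x, hx⟩ := htraj
  have hstate : ∀ k < N, x (k+1) = A.mulVec (x k) + B.mulVec (u k) := fun k hk => (hx k hk).1
  have hout : ∀ k < N, y k = C.mulVec (x k) + D.mulVec (u k) := fun k hk => (hx k hk).2
  have hL : 1 ≤ L := by omega
  have hLleN : L ≤ N := by omega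
  set F : (Fin (N-L+1) → ℝ) → ℕ → ℝ := fun α i =>
    γsq * (combSignal N L α u i ⬝ᵥ combSignal N L α u i) -
      (combSignal N L α y i - Cc.mulVec (combSignal N L α u i)) ⬝ᵥ
      (combSignal N L α y i - Cc.mulVec (combSignal N L α u i)) with hF
  have hconv : ∀ α : Fin (N-L+1) → ℝ,
      γsq * (∑ i ∈ Finset.range L, combSignal N L α u i ⬝ᵥ combSignal N L α u i) -
        ∑ i ∈ Finset.range L, (combSignal N L α y i - Cc.mulVec (combSignal N L α u i)) ⬝ᵥ
          (combSignal N L α y i - Cc.mulVec (combSignal N L α u i))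
      = ∑ i ∈ Finset.range L, F α i := by
    intro α
    rw [Finset.mul_sum, ← Finset.sum_sub_distrib]
  constructor
  · intro ha ub yb htr h hh
    obtain ⟨xb, hxb0, hxb⟩ := htr
    set ut : ℕ → Fin m → ℝ := fun k => if ν ≤ k ∧ k ≤ ν + h then ub (k - ν) else 0 with hut
    obtain ⟨α, hα0, hαu⟩ := fund hstate hpe hmin.2 hLN hL 0 ut
    have hzero : ∀ i, i ≤ ν → combSignal N L α x i = 0 := by
      intro i
      induction i with
      | zero => intro _; exact hα0
      | succ i ih =>
        intro hi
        rw [comb_step_state hstate hLleN α (by omega : i < L), ih (by omega),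
          hαu i (by omega)]
        have hut0 : ut i = 0 := by simp only [hut]; rw [if_neg (by omega)]
        rw [hut0]
        simp
    have hub : ∀ k, k ≤ h → combSignal N L α u (ν + k) = ub k := by
      intro k hk
      rw [hαu (ν+k) (by omega)]
      simp only [hut]
      rw [if_pos ⟨by omega, by omega⟩, show ν + k - ν = k by omega]
    have hmatch : ∀ k, k ≤ h + 1 → combSignal N L α x (ν + k) = xb k := by
      intro k
      induction k with
      | zero => intro _; rw [Nat.add_zero, hzero ν le_rfl, hxb0]
      | succ k ih =>
        intro hk
        rw [show ν + (k+1) = (ν + k) + 1 by omega,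
          comb_step_state hstate hLleN α (by omega : ν + k < L), ih (by omega),
          hub k (by omega), (hxb k (by omega)).1]
    have hZDP : ZeroDataPrefix N L ν α u y := by
      intro i hi
      have hu0 : combSignal N L α u i = 0 := by
        rw [hαu i (by omega)]
        simp only [hut]
        rw [if_neg (by omega)]
      refine ⟨hu0, ?_⟩
      rw [comb_out hout hLleN α (by omega : i < L), hzero i (by omega), hu0]
      simp
    have key := ha α hZDP
    rw [hconv α] at key
    rw [sum_range_split (F α) (ν + (h+1)) L (by omega),
      sum_range_split (F α) ν (ν + (h+1)) (by omega)] at key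
    have h1 : ∑ i ∈ Finset.range ν, F α i = 0 := by
      apply Finset.sum_eq_zero
      intro i hi
      have hi' := Finset.mem_range.mp hi
      obtain ⟨hu0, hy0⟩ := hZDP i hi'
      simp [hF, hu0, hy0]
    have h2 : ∀ k ∈ Finset.range ((ν + (h+1)) - ν), F α (ν + k)
        = γsq * (ub k ⬝ᵥ ub k) - (yb k - Cc.mulVec (ub k)) ⬝ᵥ (yb k - Cc.mulVec (ub k)) := by
      intro k hk
      have hk' : k ≤ h := by have := Finset.mem_range.mp hk; omega
      have hy : combSignal N L α y (ν + k) = yb k := by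
        rw [comb_out hout hLleN α (by omega : ν + k < L), hmatch k (by omega),
          hub k hk', ← (hxb k (by omega)).2]
      simp only [hF, hy, hub k hk']
    have h3 : ∑ i ∈ Finset.range (L - (ν + (h+1))), F α (ν + (h+1) + i) ≤ 0 := by
      apply Finset.sum_nonpos
      intro i hi
      have hi' := Finset.mem_range.mp hi
      have hu0 : combSignal N L α u (ν + (h+1) + i) = 0 := by
        rw [hαu (ν + (h+1) + i) (by omega)]
        simp only [hut]
        rw [if_neg (by omega)]
      simp only [hF, hu0]
      have := dotSelf_nonneg (combSignal N L α y (ν + (h+1) + i) - Cc.mulVec 0)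
      simp only [dotProduct_zero, mul_zero]
      linarith [this]
    rw [h1, Finset.sum_congr rfl h2] at key
    have h4 : ((ν + (h+1)) - ν) = h + 1 := by omega
    rw [h4] at key
    linarith
  · intro hb α hZDP
    have hcu0 : ∀ i, i < ν → combSignal N L α u i = 0 := fun i hi => (hZDP i hi).1
    have hcy0 : ∀ i, i < ν → combSignal N L α y i = 0 := fun i hi => (hZDP i hi).2
    have hpow : ∀ i, i ≤ ν → combSignal N L α x i = (A^i).mulVec (combSignal N L α x 0) := by
      intro i
      induction i with
      | zero => intro _; rw [pow_zero, Matrix.one_mulVec]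
      | succ i ih =>
        intro hi
        rw [comb_step_state hstate hLleN α (by omega : i < L), ih (by omega),
          hcu0 i (by omega), Matrix.mulVec_zero, add_zero, Matrix.mulVec_mulVec, ← pow_succ']
    have hx0 : combSignal N L α x 0 = 0 := by
      apply mulVec_inj_of_rank (obsMat A C) (by rw [hmin.1]; simp)
      funext ir
      obtain ⟨i, r⟩ := ir
      have hiν : (i:ℕ) < ν := by have := i.isLt; omega
      have hcy : C.mulVec (combSignal N L α x (i:ℕ)) = 0 := by
        have h1 := comb_out hout hLleN α (show (i:ℕ) < L by omega)
        rw [hcy0 i hiν, hcu0 i hiν, Matrix.mulVec_zero, add_zero] at h1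
        exact h1.symm
      have : (obsMat A C).mulVec (combSignal N L α x 0) (i, r)
          = ((C * A^(i:ℕ)).mulVec (combSignal N L α x 0)) r := by
        simp [obsMat, Matrix.mulVec, dotProduct]
      rw [Pi.zero_apply, this, ← Matrix.mulVec_mulVec, ← hpow (i:ℕ) (by omega), hcy]
      rfl
    have hxν : combSignal N L α x ν = 0 := by
      rw [hpow ν le_rfl, hx0, Matrix.mulVec_zero]
    have htr : IsZeroInitTrajectory A B C D (L-ν)
        (fun k => combSignal N L α u (ν+k)) (fun k => combSignal N L α y (ν+k)) := by
      refine ⟨fun k => combSignal N L α x (ν+k), hxν, fun k hk => ⟨?_, ?_⟩⟩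
      · show combSignal N L α x (ν + (k+1))
            = A.mulVec (combSignal N L α x (ν+k)) + B.mulVec (combSignal N L α u (ν+k))
        rw [show ν + (k+1) = (ν + k) + 1 by omega]
        exact comb_step_state hstate hLleN α (by omega)
      · show combSignal N L α y (ν + k)
            = C.mulVec (combSignal N L α x (ν+k)) + D.mulVec (combSignal N L α u (ν+k))
        exact comb_out hout hLleN α (by omega)
    have key := hb _ _ htr (L-ν-1) (by omega)
    rw [show L - ν - 1 + 1 = L - ν by omega] at key
    rw [hconv α, sum_range_split (F α) ν L (by omega)]
    have h1 : ∑ i ∈ Finset.range ν, F α i = 0 := by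
      apply Finset.sum_eq_zero
      intro i hi
      have hi' := Finset.mem_range.mp hi
      simp [hF, hcu0 i hi', hcy0 i hi']
    have h2 : 0 ≤ ∑ i ∈ Finset.range (L - ν), F α (ν + i) := by
      simpa [hF] using key
    rw [h1]
    linarith
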